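/- Let N and N' be infinite virtually cyclic groups with maximal finite normal subgroups C and C' respectively. If there exist injective homomorphisms ι : N → N' and ι' : N' → N, then ι(C) = C' and ι'(C') = C. In particular |C| = |C'|. -/

import Mathlib

open Subgroup
open scoped commutatorElement

/-- torsion-free generator: powers of `z` are torsion only when trivial. -/
lemma zpow_eq_one_of_isOfFinOrder {G : Type*} [Group G] {z : G}
    (hz : ¬ IsOfFinOrder z) {k : ℤ} (h : IsOfFinOrder (z ^ k)) : z ^ k = 1 := by
  rcases eq_or_ne k 0 with rfl | hk
  · simp
  · exfalso
    obtain ⟨j, hj0, hj⟩ := isOfFinOrder_iff_pow_eq_one.mp h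
    apply hz
    have : z ^ (k * j) = 1 := by
      rw [zpow_mul, zpow_natCast]; exact hj
    have hkj : k * j ≠ 0 := mul_ne_zero hk (by exact_mod_cast hj0.ne')
    refine isOfFinOrder_iff_pow_eq_one.mpr ⟨(k * j).natAbs, Int.natAbs_pos.mpr hkj, ?_⟩
    rcases Int.natAbs_eq (k * j) with he | he
    · rw [← zpow_natCast, ← he, this]
    · rw [← zpow_natCast, ← neg_neg ((k*j).natAbs : ℤ), ← he, zpow_neg, this, inv_one]

lemma isOfFinOrder_coe_iff {G : Type*} [Group G] {H : Subgroup G} (a : H) :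
    IsOfFinOrder (a : G) ↔ IsOfFinOrder a := by
  rw [← orderOf_pos_iff, ← orderOf_pos_iff, Subgroup.orderOf_coe]

/-- quotient by `zpowers (z ^ n)` is finite if quotient by `zpowers z` is. -/
lemma finite_quotient_zpowers_pow {G : Type*} [Group G] (z : G)
    (hfin : Finite (G ⧸ Subgroup.zpowers z)) {n : ℕ} (hn : n ≠ 0) :
    Finite (G ⧸ Subgroup.zpowers (z ^ n)) := by
  haveI := hfin
  haveI : NeZero n := ⟨hn⟩
  set Z := Subgroup.zpowers z with hZ
  set W := Subgroup.zpowers (z ^ n) with hW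
  have hsur : Function.Surjective (fun p : (G ⧸ Z) × Fin n =>
      (QuotientGroup.mk (Quotient.out p.1 * z ^ (p.2 : ℕ)) : G ⧸ W)) := by
    intro q
    induction q using QuotientGroup.induction_on with
    | H g =>
      set a := Quotient.out (QuotientGroup.mk g : G ⧸ Z) with ha
      have hmk : (QuotientGroup.mk a : G ⧸ Z) = QuotientGroup.mk g := Quotient.out_eq _
      have hmem : a⁻¹ * g ∈ Z := (QuotientGroup.eq).mp hmk
      obtain ⟨k, hk⟩ := Subgroup.mem_zpowers_iff.mp hmem
      have hi0 : (0:ℤ) ≤ k % (n:ℤ) := Int.emod_nonneg k (by exact_mod_cast hn)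
      have hilt : k % (n:ℤ) < (n:ℤ) := Int.emod_lt_of_pos k (by exact_mod_cast Nat.pos_of_ne_zero hn)
      set i : ℕ := (k % (n:ℤ)).toNat with hi
      have hicast : (i : ℤ) = k % (n:ℤ) := Int.toNat_of_nonneg hi0
      have hiltn : i < n := by omega
      refine ⟨(QuotientGroup.mk g, ⟨i, hiltn⟩), ?_⟩
      show (QuotientGroup.mk (a * z ^ i) : G ⧸ W) = QuotientGroup.mk g
      rw [QuotientGroup.eq]
      have : (a * z ^ i)⁻¹ * g = z ^ (k - (i:ℤ)) := by
        rw [mul_inv_rev, mul_assoc, ← hk, zpow_sub, ← zpow_natCast]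
        group
      rw [this]
      have hdiv : k - (i:ℤ) = (n:ℤ) * (k / (n:ℤ)) := by
        have := Int.mul_ediv_add_emod k (n:ℤ)
        omega
      rw [hdiv, zpow_mul, hW]
      exact ⟨k / (n:ℤ), by rw [← zpow_natCast z n]⟩
  exact Finite.of_surjective _ hsur

lemma exists_gen {G : Type*} [Group G] [Infinite G]
    (hvc : ∃ H : Subgroup G, IsCyclic H ∧ H.FiniteIndex) :
    ∃ z : G, (Subgroup.zpowers z).Normal ∧ (Subgroup.zpowers z).FiniteIndex ∧
      ¬ IsOfFinOrder z := by
  obtain ⟨H, hHc, hHi⟩ := hvc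
  haveI := hHi
  set Z := H.normalCore with hZdef
  haveI : Z.FiniteIndex := Subgroup.finiteIndex_normalCore H
  haveI : IsCyclic Z := by
    haveI := hHc
    exact Subgroup.isCyclic_of_le (Subgroup.normalCore_le H)
  obtain ⟨zz, hzz⟩ := IsCyclic.exists_generator (α := Z)
  have hZ : Z = Subgroup.zpowers (zz : G) := by
    ext x
    constructor
    · intro hx
      obtain ⟨k, hk⟩ := Subgroup.mem_zpowers_iff.mp (hzz ⟨x, hx⟩)
      refine ⟨k, ?_⟩
      have := congrArg (Subtype.val) hk
      simpa using this
    · rintro ⟨k, rfl⟩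
      have : ((zz ^ k : Z) : G) = (zz : G) ^ k := by norm_cast
      rw [show (fun x => (zz : G) ^ x) k = (zz:G)^k from rfl, ← this]
      exact (zz ^ k).2
  refine ⟨(zz : G), hZ ▸ H.normalCore_normal, hZ ▸ inferInstance, ?_⟩
  intro hord
  have hfinZ : Finite Z := by
    rw [hZ]
    exact Set.Finite.to_subtype hord.finite_zpowers
  haveI : Finite (G ⧸ Z) := inferInstance
  haveI : Finite G := Finite.of_equiv _ (Subgroup.groupEquivQuotientProdSubgroup (s := Z)).symm
  exact not_finite G

lemma finite_commutatorSet_of_finiteIndex_center {H : Type*} [Group H]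
    [hfi : (Subgroup.center H).FiniteIndex] : Finite (commutatorSet H) := by
  have key : ∀ (a b c : H), c ∈ Subgroup.center H → ⁅a * c, b⁆ = ⁅a, b⁆ := by
    intro a b c hc
    have hcb := (Subgroup.mem_center_iff.mp hc) b
    simp only [commutatorElement_def, mul_inv_rev]
    rw [mul_assoc a c b, ← hcb]
    group
  have key2 : ∀ (a b c : H), c ∈ Subgroup.center H → ⁅a, b * c⁆ = ⁅a, b⁆ := by
    intro a b c hc
    rw [← commutatorElement_inv, key b a c hc, commutatorElement_inv]
  set Zc := Subgroup.center H
  have hsur : Function.Surjective (fun p : (H ⧸ Zc) × (H ⧸ Zc) =>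
      (⟨⁅Quotient.out p.1, Quotient.out p.2⁆, commutator_mem_commutatorSet _ _⟩ : commutatorSet H)) := by
    rintro ⟨x, a, b, rfl⟩
    refine ⟨(QuotientGroup.mk a, QuotientGroup.mk b), ?_⟩
    set a' := Quotient.out (QuotientGroup.mk a : H ⧸ Zc) with ha'
    set b' := Quotient.out (QuotientGroup.mk b : H ⧸ Zc) with hb'
    have hma : a'⁻¹ * a ∈ Zc := (QuotientGroup.eq).mp (Quotient.out_eq _)
    have hmb : b'⁻¹ * b ∈ Zc := (QuotientGroup.eq).mp (Quotient.out_eq _)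
    have ea : a = a' * (a'⁻¹ * a) := by group
    have eb : b = b' * (b'⁻¹ * b) := by group
    apply Subtype.ext
    show ⁅a', b'⁆ = ⁅a, b⁆
    conv_rhs => rw [ea, eb]
    rw [key _ _ _ hma, key2 _ _ _ hmb]
  haveI : Finite (H ⧸ Zc) := inferInstance
  exact Finite.of_surjective _ hsur

lemma key_lemma {G : Type*} [Group G] [Infinite G]
    (hvc : ∃ H : Subgroup G, IsCyclic H ∧ H.FiniteIndex)
    (F P : Subgroup G) (hF : Finite F) (hP : P.FiniteIndex)
    (hPF : ∀ p ∈ P, ∀ f ∈ F, p * f * p⁻¹ ∈ F) :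
    ∃ D : Subgroup G, D.Normal ∧ Finite D ∧ F ≤ D := by
  classical
  haveI := hP
  haveI := hF
  obtain ⟨z, hZn, hZi, hzord⟩ := exists_gen hvc
  haveI := hZi
  -- Step 1: find m > 0 with z ^ m ∈ P
  obtain ⟨m, hm0, hmP⟩ : ∃ m : ℕ, 0 < m ∧ z ^ m ∈ P := by
    haveI : Finite (G ⧸ P) := inferInstance
    obtain ⟨a, b, hab, he⟩ := Finite.exists_ne_map_eq_of_infinite
      (fun k : ℕ => (QuotientGroup.mk (z ^ k) : G ⧸ P))
    rcases hab.lt_or_gt with h | h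
    · refine ⟨b - a, by omega, ?_⟩
      have h2 := (QuotientGroup.eq).mp he
      have h3 : z ^ (b - a) = (z ^ a)⁻¹ * z ^ b := by
        rw [eq_inv_mul_iff_mul_eq, ← pow_add]; congr 1; omega
      rw [h3]; exact h2
    · refine ⟨a - b, by omega, ?_⟩
      have h2 := (QuotientGroup.eq).mp he.symm
      have h3 : z ^ (a - b) = (z ^ b)⁻¹ * z ^ a := by
        rw [eq_inv_mul_iff_mul_eq, ← pow_add]; congr 1; omega
      rw [h3]; exact h2
  set p := z ^ m with hpdef
  -- Step 2: conjugation by p permutes F; some power of p centralizes F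
  have hmap : F.map ((MulAut.conj p) : G →* G) = F := by
    apply le_antisymm
    · rintro x ⟨f, hf, rfl⟩
      exact hPF p hmP f hf
    · intro f hf
      refine ⟨p⁻¹ * f * p, ?_, ?_⟩
      · have := hPF p⁻¹ (inv_mem hmP) f hf
        simpa using this
      · show MulAut.conj p (p⁻¹ * f * p) = f
        rw [MulAut.conj_apply]
        group
  set e : F ≃* F := ((MulAut.conj p).subgroupMap F).trans (MulEquiv.subgroupCongr hmap) with he
  set σ : Equiv.Perm F := e.toEquiv with hσdef
  have hσ1 : ∀ x : F, ((σ x : F) : G) = p * x * p⁻¹ := by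
    intro x
    rfl
  have hσpow : ∀ (k : ℕ) (x : F), ((σ ^ k) x : G) = p ^ k * x * (p ^ k)⁻¹ := by
    intro k
    induction k with
    | zero => intro x; simp
    | succ n ih =>
      intro x
      rw [pow_succ', Equiv.Perm.mul_apply, hσ1 ((σ ^ n) x), ih x, pow_succ']
      group
  haveI : Finite (Equiv.Perm F) := inferInstance
  set r := orderOf σ with hr
  have hr0 : 0 < r := orderOf_pos σ
  have hfix : ∀ x ∈ F, p ^ r * x * (p ^ r)⁻¹ = x := by
    intro x hx
    have h1 : (σ ^ r) ⟨x, hx⟩ = ⟨x, hx⟩ := by rw [pow_orderOf_eq_one]; rfl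
    have := hσpow r ⟨x, hx⟩
    rw [h1] at this
    exact this.symm
  set w := z ^ (m * r) with hwdef
  have hwp : w = p ^ r := by rw [hwdef, hpdef, pow_mul]
  have hword : ¬ IsOfFinOrder w := by
    intro h
    have : w = 1 := by
      have : IsOfFinOrder (z ^ ((m * r : ℕ) : ℤ)) := by rwa [zpow_natCast]
      have := zpow_eq_one_of_isOfFinOrder hzord this
      rwa [zpow_natCast] at this
    apply hzord
    refine isOfFinOrder_iff_pow_eq_one.mpr ⟨m * r, by positivity, this⟩
  -- Step 3: W := zpowers w is normal with finite quotient
  set W := Subgroup.zpowers w with hWdef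
  have hWn : W.Normal := by
    constructor
    intro x hx g
    obtain ⟨k, rfl⟩ := Subgroup.mem_zpowers_iff.mp hx
    obtain ⟨t, ht⟩ := Subgroup.mem_zpowers_iff.mp (hZn.conj_mem z (Subgroup.mem_zpowers z) g)
    have hgw : g * w * g⁻¹ = w ^ t := by
      have : g * w * g⁻¹ = (g * z * g⁻¹) ^ (m * r) := by
        rw [hwdef]
        simp [conj_pow]
      rw [this, ← ht, ← zpow_natCast (z ^ t), ← zpow_mul, hwdef, ← zpow_natCast z (m * r),
        ← zpow_mul, mul_comm (t : ℤ) ((m * r : ℕ) : ℤ)]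
    have : g * w ^ k * g⁻¹ = (g * w * g⁻¹) ^ k := by simp [conj_zpow]
    rw [this, hgw, ← zpow_mul]
    exact Subgroup.mem_zpowers_iff.mpr ⟨t * k, by rw [zpow_mul]⟩
  have hWfin : Finite (G ⧸ W) := by
    rw [hWdef, hwdef]
    exact finite_quotient_zpowers_pow z inferInstance (by positivity)
  -- Step 4: M := centralizer of w
  set M := Subgroup.centralizer {w} with hMdef
  have hwM : ∀ x : G, x ∈ M ↔ w * x = x * w := by
    intro x
    rw [hMdef, Subgroup.mem_centralizer_iff]
    simp
  have hFM : F ≤ M := by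
    intro x hx
    rw [hwM]
    have := hfix x hx
    rw [← hwp] at this
    calc w * x = (w * x * w⁻¹) * w := by group
    _ = x * w := by rw [this]
  have hMn : M.Normal := by
    constructor
    intro x hx g
    rw [hwM]
    obtain ⟨t, ht⟩ := Subgroup.mem_zpowers_iff.mp (hWn.conj_mem w (Subgroup.mem_zpowers w) g⁻¹)
    have hxw : w * x = x * w := (hwM x).mp hx
    have hcomm : (w ^ t) * x = x * (w ^ t) := ((Commute.zpow_left (hxw : Commute w x) t)).eq
    have hgw : g⁻¹ * w * g = w ^ t := by rw [ht]; group
    have e3 : g * w ^ t * g⁻¹ = w := by rw [← hgw]; group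
    calc w * (g * x * g⁻¹) = g * ((g⁻¹ * w * g) * x) * g⁻¹ := by group
    _ = g * (w ^ t * x) * g⁻¹ := by rw [hgw]
    _ = g * (x * w ^ t) * g⁻¹ := by rw [hcomm]
    _ = (g * x * g⁻¹) * (g * w ^ t * g⁻¹) := by group
    _ = (g * x * g⁻¹) * w := by rw [e3]
  -- Step 5: W ≤ M, center of M has finite index
  have hwinM : w ∈ M := by rw [hwM]
  have hWM : W ≤ M := by
    intro x hx
    obtain ⟨k, rfl⟩ := Subgroup.mem_zpowers_iff.mp hx
    rw [hwM]
    exact (Commute.zpow_right (Commute.refl w) k).eq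
  haveI hMWfin : Finite (M ⧸ W.subgroupOf M) := by
    have hequiv := Subgroup.quotientEquivProdOfLE hWM
    haveI : Finite (G ⧸ W) := hWfin
    haveI : Finite ((G ⧸ M) × M ⧸ W.subgroupOf M) := Finite.of_equiv _ hequiv
    exact Finite.of_surjective (Prod.snd : (G ⧸ M) × (M ⧸ W.subgroupOf M) → _)
      Prod.snd_surjective
  haveI : (W.subgroupOf M).FiniteIndex := ⟨Subgroup.index_ne_zero_of_finite⟩
  have hWcen : W.subgroupOf M ≤ Subgroup.center M := by
    intro x hx
    rw [Subgroup.mem_center_iff]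
    intro mm
    have hx' : (x : G) ∈ W := hx
    obtain ⟨k, hk⟩ := Subgroup.mem_zpowers_iff.mp hx'
    have hmw : Commute (mm : G) w := ((hwM mm).mp mm.2).symm
    have h2 : (mm : G) * w ^ k = w ^ k * (mm : G) := (Commute.zpow_right hmw k).eq
    apply Subtype.ext
    show (mm : G) * x = (x : G) * mm
    rw [← hk]
    exact h2
  haveI : (Subgroup.center M).FiniteIndex := Subgroup.finiteIndex_of_le hWcen
  haveI : Finite (commutatorSet M) := finite_commutatorSet_of_finiteIndex_center
  haveI : Finite (_root_.commutator M) := inferInstance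
  -- Step 6: the torsion subgroup of M
  have hconj_tor : ∀ (x g : G), IsOfFinOrder x → IsOfFinOrder (g * x * g⁻¹) := by
    intro x g hx
    have := ((MulAut.conj g) : G →* G).isOfFinOrder hx
    simpa using this
  set T : Subgroup G := {
    carrier := {x : G | x ∈ M ∧ IsOfFinOrder x}
    one_mem' := ⟨one_mem M, IsOfFinOrder.one⟩
    inv_mem' := by rintro x ⟨hm, ho⟩; exact ⟨inv_mem hm, ho.inv⟩
    mul_mem' := by
      rintro a b ⟨haM, haO⟩ ⟨hbM, hbO⟩
      refine ⟨mul_mem haM hbM, ?_⟩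
      set A : M := ⟨a, haM⟩ with hA
      set B : M := ⟨b, hbM⟩ with hB
      have haO' : IsOfFinOrder A := (isOfFinOrder_coe_iff A).mp haO
      have hbO' : IsOfFinOrder B := (isOfFinOrder_coe_iff B).mp hbO
      have h1 : IsOfFinOrder (Abelianization.of A * Abelianization.of B) :=
        (Abelianization.of.isOfFinOrder haO').mul (Abelianization.of.isOfFinOrder hbO')
      rw [← map_mul] at h1
      obtain ⟨n, hn0, hn⟩ := isOfFinOrder_iff_pow_eq_one.mp h1
      rw [← map_pow] at hn
      have hker : (A * B) ^ n ∈ _root_.commutator M :=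
        (QuotientGroup.eq_one_iff _).mp hn
      have h2 : IsOfFinOrder ((A * B) ^ n) :=
        (isOfFinOrder_coe_iff (⟨(A * B) ^ n, hker⟩ : _root_.commutator M)).mpr
          (isOfFinOrder_of_finite _)
      obtain ⟨j, hj0, hj⟩ := isOfFinOrder_iff_pow_eq_one.mp h2
      have hAB : IsOfFinOrder (A * B) := by
        refine isOfFinOrder_iff_pow_eq_one.mpr ⟨n * j, by positivity, ?_⟩
        rw [pow_mul]
        exact hj
      have := (isOfFinOrder_coe_iff (A * B)).mpr hAB
      simpa using this }
    with hTdef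
  have hTmem : ∀ x : G, x ∈ T ↔ x ∈ M ∧ IsOfFinOrder x := fun _ => Iff.rfl
  have hTn : T.Normal := by
    constructor
    intro x hxT g
    obtain ⟨hxM, hxO⟩ := (hTmem x).mp hxT
    exact (hTmem _).mpr ⟨hMn.conj_mem x hxM g, hconj_tor x g hxO⟩
  have hFT : F ≤ T := fun x hx => (hTmem x).mpr
    ⟨hFM hx, by
      have := (isOfFinOrder_coe_iff (⟨x, hx⟩ : F)).mpr (isOfFinOrder_of_finite _)
      simpa using this⟩
  have hTfin : Finite T := by
    have hinj : Function.Injective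
        (fun t : T => (QuotientGroup.mk (t : G) : G ⧸ Subgroup.zpowers z)) := by
      intro s t hst
      have hmem : (s : G)⁻¹ * t ∈ Subgroup.zpowers z := (QuotientGroup.eq).mp hst
      obtain ⟨k, hk⟩ := Subgroup.mem_zpowers_iff.mp hmem
      have hT : (s : G)⁻¹ * t ∈ T := mul_mem (inv_mem s.2) t.2
      have htor : IsOfFinOrder ((s : G)⁻¹ * t) := ((hTmem _).mp hT).2
      rw [← hk] at htor
      have h1 : (s : G)⁻¹ * t = 1 := by
        rw [← hk]
        exact zpow_eq_one_of_isOfFinOrder hzord htor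
      rw [inv_mul_eq_one] at h1
      exact Subtype.ext h1
    exact Finite.of_injective _ hinj
  exact ⟨T, hTn, hTfin, hFT⟩

lemma finiteIndex_of_infinite {G : Type*} [Group G] [Infinite G]
    (hvc : ∃ H : Subgroup G, IsCyclic H ∧ H.FiniteIndex)
    (P : Subgroup G) (hP : Infinite P) : P.FiniteIndex := by
  obtain ⟨z, hZn, hZi, hzord⟩ := exists_gen hvc
  haveI := hZi
  haveI : Finite (G ⧸ Subgroup.zpowers z) := inferInstance
  obtain ⟨s, t, hst, he⟩ := Finite.exists_ne_map_eq_of_infinite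
    (fun q : P => (QuotientGroup.mk (q : G) : G ⧸ Subgroup.zpowers z))
  have hmem : (s : G)⁻¹ * t ∈ Subgroup.zpowers z := (QuotientGroup.eq).mp he
  obtain ⟨k, hk⟩ := Subgroup.mem_zpowers_iff.mp hmem
  have hx : z ^ k ∈ P := by rw [hk]; exact mul_mem (inv_mem s.2) t.2
  have hkne : k ≠ 0 := by
    rintro rfl
    apply hst
    apply Subtype.ext
    have : (s : G)⁻¹ * t = 1 := by rw [← hk]; simp
    rwa [inv_mul_eq_one] at this
  have hle : Subgroup.zpowers (z ^ k) ≤ P := Subgroup.zpowers_le.mpr hx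
  have hzk : Subgroup.zpowers (z ^ k) = Subgroup.zpowers (z ^ k.natAbs) := by
    rcases Int.natAbs_eq k with h | h
    · have hzz : z ^ k = z ^ (k.natAbs : ℕ) := by rw [← zpow_natCast, ← h]
      rw [hzz]
    · have hzz : z ^ k = (z ^ (k.natAbs : ℕ))⁻¹ := by rw [← zpow_natCast, ← zpow_neg, ← h]
      rw [hzz, Subgroup.zpowers_inv]
  haveI : Finite (G ⧸ Subgroup.zpowers (z ^ k.natAbs)) :=
    finite_quotient_zpowers_pow z inferInstance (Int.natAbs_ne_zero.mpr hkne)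
  haveI : (Subgroup.zpowers (z ^ k.natAbs)).FiniteIndex := ⟨Subgroup.index_ne_zero_of_finite⟩
  haveI : (Subgroup.zpowers (z ^ k)).FiniteIndex := by rwa [hzk]
  exact Subgroup.finiteIndex_of_le hle

lemma map_le_max {A B : Type*} [Group A] [Group B] [Infinite A] [Infinite B]
    (hvcB : ∃ H : Subgroup B, IsCyclic H ∧ H.FiniteIndex)
    (C0 : Subgroup A) (hC0n : C0.Normal) (hC0f : Finite C0)
    (C1 : Subgroup B) (hmax : ∀ D : Subgroup B, D.Normal → Finite D → D ≤ C1)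
    (f : A →* B) (hf : Function.Injective f) : C0.map f ≤ C1 := by
  have hPinf : Infinite f.range := Infinite.of_injective
    (fun a : A => (⟨f a, ⟨a, rfl⟩⟩ : f.range))
    (fun x y hxy => hf (congrArg Subtype.val hxy))
  have hPfi : f.range.FiniteIndex := finiteIndex_of_infinite hvcB f.range hPinf
  have hFfin : Finite (C0.map f) := by
    haveI := hC0f
    have h1 : (C0 : Set A).Finite := Set.toFinite _
    have h2 : ((C0.map f : Subgroup B) : Set B) = f '' (C0 : Set A) := Subgroup.coe_map f C0
    have := h1.image f
    rw [← h2] at this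
    exact this.to_subtype
  have hnorm : ∀ p ∈ f.range, ∀ x ∈ C0.map f, p * x * p⁻¹ ∈ C0.map f := by
    rintro p ⟨a, rfl⟩ x ⟨c, hc, rfl⟩
    exact ⟨a * c * a⁻¹, hC0n.conj_mem c hc a, by simp⟩
  obtain ⟨D, hDn, hDf, hFD⟩ := key_lemma hvcB (C0.map f) f.range hFfin hPfi hnorm
  exact le_trans hFD (hmax D hDn hDf)

/-- Let `N`, `N'` be infinite virtually cyclic groups with maximal finite normal subgroups
`C`, `C'`.  If there are injective homomorphisms `ι : N → N'` and `ι' : N' → N`, then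
`ι(C) = C'` and `ι'(C') = C`; in particular `|C| = |C'|`. -/
theorem stmt_17 {N N' : Type*} [Group N] [Group N'] [Infinite N] [Infinite N']
    (hvc : ∃ H : Subgroup N, IsCyclic H ∧ H.FiniteIndex)
    (hvc' : ∃ H : Subgroup N', IsCyclic H ∧ H.FiniteIndex)
    (C : Subgroup N) (C' : Subgroup N')
    (hCn : C.Normal) (hCfin : Finite C)
    (hCmax : ∀ D : Subgroup N, D.Normal → Finite D → D ≤ C)
    (hC'n : C'.Normal) (hC'fin : Finite C')
    (hC'max : ∀ D : Subgroup N', D.Normal → Finite D → D ≤ C')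
    (ι : N →* N') (ι' : N' →* N)
    (hι : Function.Injective ι) (hι' : Function.Injective ι') :
    C.map ι = C' ∧ C'.map ι' = C ∧ Nat.card C = Nat.card C' := by
  haveI := hCfin
  haveI := hC'fin
  have h1 : C.map ι ≤ C' := map_le_max hvc' C hCn hCfin C' hC'max ι hι
  have h2 : C'.map ι' ≤ C := map_le_max hvc C' hC'n hC'fin C hCmax ι' hι'
  have e1 : Nat.card (C.map ι) = Nat.card C :=
    (Nat.card_congr (Subgroup.equivMapOfInjective C ι hι).toEquiv).symm
  have e2 : Nat.card (C'.map ι') = Nat.card C' :=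
    (Nat.card_congr (Subgroup.equivMapOfInjective C' ι' hι').toEquiv).symm
  have le1 : Nat.card (C.map ι) ≤ Nat.card C' := Subgroup.card_le_of_le h1
  have le2 : Nat.card (C'.map ι') ≤ Nat.card C := Subgroup.card_le_of_le h2
  have hcard : Nat.card C = Nat.card C' := by omega
  have heq1 : C.map ι = C' := by
    apply SetLike.ext'
    apply Set.eq_of_subset_of_ncard_le h1 _ (Set.toFinite _)
    rw [← Nat.card_coe_set_eq, ← Nat.card_coe_set_eq]
    show Nat.card C' ≤ Nat.card (C.map ι)
    omega
  have heq2 : C'.map ι' = C := by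
    apply SetLike.ext'
    apply Set.eq_of_subset_of_ncard_le h2 _ (Set.toFinite _)
    rw [← Nat.card_coe_set_eq, ← Nat.card_coe_set_eq]
    show Nat.card C ≤ Nat.card (C'.map ι')
    omega
  exact ⟨heq1, heq2, hcard⟩
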